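/- There exist δ ∈ (0,r), ρ ∈ (0,r), and a complex analytic map y : B_ℂ(0,δ) → E with y(0) = 0 and ‖y(x)‖ < ρ for all |x| < δ, such that y(x) = G(y(x)) + x·h(x, y(x)) for every x ∈ B_ℂ(0,δ); moreover the solution is unique pointwise: if |x₀| < δ, ‖y₀‖ < ρ and y₀ = G(y₀) + x₀·h(x₀, y₀), then y₀ = y(x₀). -/

import Mathlib

open Filter Topology

theorem stmt5 {E : Type*} [NormedAddCommGroup E] [NormedSpace ℂ E] [CompleteSpace E]
    (r : ℝ) (hr : 0 < r) (κ : ℝ) (hκ0 : 0 < κ) (hκ1 : κ < 1)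
    (G : E → E) (hG : AnalyticOnNhd ℂ G (Metric.ball 0 r)) (hG0 : G 0 = 0)
    (hGlip : ∀ y ∈ Metric.ball (0 : E) r, ∀ y' ∈ Metric.ball (0 : E) r,
      ‖G y - G y'‖ ≤ κ * ‖y - y'‖)
    (h : ℂ × E → E)
    (hh : AnalyticOnNhd ℂ h (Metric.ball (0 : ℂ) r ×ˢ Metric.ball (0 : E) r)) :
    ∃ δ ρ : ℝ, 0 < δ ∧ δ < r ∧ 0 < ρ ∧ ρ < r ∧
      ∃ y : ℂ → E, AnalyticOnNhd ℂ y (Metric.ball 0 δ) ∧ y 0 = 0 ∧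
        (∀ x ∈ Metric.ball (0 : ℂ) δ,
          ‖y x‖ < ρ ∧ y x = G (y x) + x • h (x, y x)) ∧
        (∀ x₀ ∈ Metric.ball (0 : ℂ) δ, ∀ y₀ : E, ‖y₀‖ < ρ →
          y₀ = G y₀ + x₀ • h (x₀, y₀) → y₀ = y x₀) := by
  classical
  -- basic membership facts
  have h0E : (0 : E) ∈ Metric.ball (0 : E) r := by simpa using hr
  have h00 : ((0 : ℂ), (0 : E)) ∈ Metric.ball (0 : ℂ) r ×ˢ Metric.ball (0 : E) r := by
    constructor <;> simpa using hr
  -- the map Φ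
  set Φ : ℂ × E → ℂ × E := fun p => (p.1, p.2 - G p.2 - p.1 • h p) with hΦdef
  have hΦ00 : Φ ((0 : ℂ), (0 : E)) = ((0 : ℂ), (0 : E)) := by
    simp [hΦdef, hG0]
  -- analyticity of Φ at (0,0)
  have hGan : AnalyticAt ℂ G (0 : E) := hG 0 h0E
  have hhan : AnalyticAt ℂ h ((0 : ℂ), (0 : E)) := hh _ h00
  have hΦan : AnalyticAt ℂ Φ ((0 : ℂ), (0 : E)) := by
    apply AnalyticAt.prod analyticAt_fst
    exact (analyticAt_snd.sub (hGan.comp_of_eq analyticAt_snd rfl)).sub (analyticAt_fst.smul hhan)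
  -- the derivative of G at 0 has norm < 1
  set A : E →L[ℂ] E := fderiv ℂ G 0 with hAdef
  have hGder : HasStrictFDerivAt G A 0 := hGan.hasStrictFDerivAt
  have hAnorm : ‖A‖ < 1 := by
    have hlip : LipschitzOnWith κ.toNNReal G (Metric.ball (0 : E) r) := by
      rw [lipschitzOnWith_iff_dist_le_mul]
      intro a ha b hb
      rw [dist_eq_norm, dist_eq_norm]
      simpa [Real.coe_toNNReal _ hκ0.le] using hGlip a ha b hb
    have := hGder.hasFDerivAt.le_of_lipschitzOn (Metric.ball_mem_nhds 0 hr) hlip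
    calc ‖A‖ ≤ κ.toNNReal := this
      _ < 1 := by simpa [Real.coe_toNNReal _ hκ0.le] using hκ1
  -- the linear equivalence which is the derivative of Φ at (0,0)
  set U : (E →L[ℂ] E)ˣ := Units.oneSub A hAnorm with hUdef
  set L : (ℂ × E) ≃L[ℂ] (ℂ × E) :=
    (ContinuousLinearEquiv.refl ℂ ℂ).skewProd
      (ContinuousLinearEquiv.unitsEquiv ℂ E U)
      ((ContinuousLinearMap.id ℂ ℂ).smulRight (-(h ((0:ℂ), (0:E))))) with hLdef
  -- strict derivative of Φ
  have hhder : HasStrictFDerivAt h (fderiv ℂ h ((0:ℂ),(0:E))) ((0:ℂ),(0:E)) :=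
    hhan.hasStrictFDerivAt
  have hΦder : HasStrictFDerivAt Φ (L : (ℂ × E) →L[ℂ] (ℂ × E)) ((0:ℂ),(0:E)) := by
    have h2 := (hasStrictFDerivAt_snd.sub
        (hGder.comp ((0:ℂ),(0:E)) hasStrictFDerivAt_snd)).sub
        (hasStrictFDerivAt_fst.smul hhder)
    have hcomb := (hasStrictFDerivAt_fst (𝕜 := ℂ) (p := ((0:ℂ),(0:E)))).prodMk h2
    have key : (L : (ℂ × E) →L[ℂ] (ℂ × E)) =
        (ContinuousLinearMap.fst ℂ ℂ E).prod
          ((ContinuousLinearMap.snd ℂ ℂ E - A.comp (ContinuousLinearMap.snd ℂ ℂ E)) -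
            (((0:ℂ),(0:E)).1 • fderiv ℂ h ((0:ℂ),(0:E)) +
              (ContinuousLinearMap.fst ℂ ℂ E).smulRight (h ((0:ℂ),(0:E))))) := by
      apply ContinuousLinearMap.ext
      rintro ⟨u, v⟩
      simp [hLdef, hUdef, Units.val_oneSub, ContinuousLinearEquiv.skewProd_apply,
        ContinuousLinearMap.prod_apply, sub_sub, smul_neg]
      abel
    rw [key]
    exact hcomb
  -- the partial homeomorphism from the inverse function theorem
  set f : OpenPartialHomeomorph (ℂ × E) (ℂ × E) := hΦder.toOpenPartialHomeomorph Φ with hfdef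
  have hfcoe : (f : ℂ × E → ℂ × E) = Φ := hΦder.toOpenPartialHomeomorph_coe
  have hmem0 : ((0:ℂ),(0:E)) ∈ f.source := hΦder.mem_toOpenPartialHomeomorph_source
  have hmem0t : ((0:ℂ),(0:E)) ∈ f.target := by
    have := f.map_source hmem0
    rwa [hfcoe, hΦ00] at this
  have hψ0 : f.symm ((0:ℂ),(0:E)) = ((0:ℂ),(0:E)) := by
    have := f.left_inv hmem0
    rwa [hfcoe, hΦ00] at this
  -- power series of Φ at (0,0) and analyticity of the inverse
  obtain ⟨p, hp⟩ := hΦan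
  have hp1 : p 1 = (continuousMultilinearCurryFin1 ℂ (ℂ × E) (ℂ × E)).symm
      (L : (ℂ × E) →L[ℂ] (ℂ × E)) := by
    have h1 := hp.hasFDerivAt
    have h2 := h1.unique hΦder.hasFDerivAt
    rw [← h2, LinearIsometryEquiv.symm_apply_apply]
  have hpf : HasFPowerSeriesAt (f : ℂ × E → ℂ × E) p ((0:ℂ),(0:E)) := by
    rwa [hfcoe]
  have hsymman : AnalyticAt ℂ f.symm ((0:ℂ),(0:E)) := by
    have := (f.hasFPowerSeriesAt_symm hmem0 hpf hp1).analyticAt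
    rwa [hfcoe, hΦ00] at this
  -- neighborhood where the inverse is analytic
  obtain ⟨V, hVsub, hVopen, hV0⟩ := mem_nhds_iff.1 hsymman.eventually_analyticAt
  -- ball inside the source
  obtain ⟨ε₁, hε₁pos, hε₁sub⟩ := Metric.isOpen_iff.1 f.open_source _ hmem0
  have hballs : Metric.ball (0:ℂ) ε₁ ×ˢ Metric.ball (0:E) ε₁ ⊆ f.source := by
    rw [ball_prod_same]
    exact hε₁sub
  -- radius ρ
  set ρ : ℝ := min ε₁ r / 2 with hρdef
  have hρpos : 0 < ρ := by positivity
  have hρr : ρ < r := by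
    rw [hρdef]
    have := min_le_right ε₁ r
    linarith
  have hρε₁ : ρ < ε₁ := by
    rw [hρdef]
    have := min_le_left ε₁ r
    linarith
  -- δ₀ : (x,0) lands in target ∩ V
  have hWopen : IsOpen (f.target ∩ V) := f.open_target.inter hVopen
  have hW0 : ((0:ℂ),(0:E)) ∈ f.target ∩ V := ⟨hmem0t, hV0⟩
  have hι : Continuous (fun x : ℂ => (x, (0:E))) := continuous_id.prodMk continuous_const
  obtain ⟨δ₀, hδ₀pos, hδ₀⟩ := Metric.isOpen_iff.1 (hWopen.preimage hι) 0 (by simpa using hW0)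
  -- the candidate function
  set Y : ℂ → E := fun x => (f.symm (x, (0:E))).2 with hYdef
  have hY0 : Y 0 = 0 := by
    simp only [hYdef]
    rw [hψ0]
  -- continuity of Y at 0, get δ₂ with ‖Y x‖ < ρ
  have hYc : ContinuousAt Y 0 := by
    have h1 : ContinuousAt (fun x : ℂ => (x, (0:E))) 0 := hι.continuousAt
    have h2 : ContinuousAt f.symm ((0:ℂ),(0:E)) := f.continuousAt_symm hmem0t
    exact continuous_snd.continuousAt.comp (h2.comp_of_eq h1 rfl)
  have hYtend : Tendsto (fun x => ‖Y x‖) (𝓝 0) (𝓝 0) := by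
    have h3 : Tendsto (fun x => ‖Y x‖) (𝓝 0) (𝓝 ‖Y 0‖) := hYc.norm
    simpa [hY0] using h3
  have hev : ∀ᶠ x in 𝓝 (0:ℂ), ‖Y x‖ < ρ := hYtend.eventually_lt_const hρpos
  obtain ⟨δ₂, hδ₂pos, hδ₂⟩ := Metric.eventually_nhds_iff_ball.1 hev
  -- choice of δ
  set δ : ℝ := min (min δ₀ δ₂) (min (ε₁/2) (r/2)) with hδdef
  have hδpos : 0 < δ := by positivity
  have hδr : δ < r := by
    have h1 : δ ≤ r / 2 := (min_le_right _ _).trans (min_le_right _ _)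
    linarith
  -- key fact: for |x| < δ, (x,0) is in target ∩ V
  have hxmem : ∀ x : ℂ, x ∈ Metric.ball (0:ℂ) δ → ((x, (0:E)) ∈ f.target ∧ (x, (0:E)) ∈ V) := by
    intro x hx
    have : x ∈ Metric.ball (0:ℂ) δ₀ := by
      refine Metric.ball_subset_ball ?_ hx
      exact (min_le_left _ _).trans (min_le_left _ _)
    exact hδ₀ this
  -- for |x| < δ, f.symm (x, 0) = (x, Y x)
  have hψx : ∀ x : ℂ, x ∈ Metric.ball (0:ℂ) δ → f.symm (x, (0:E)) = (x, Y x) := by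
    intro x hx
    have ht := (hxmem x hx).1
    have hri := f.right_inv ht
    rw [hfcoe] at hri
    have h1 : (f.symm (x, (0:E))).1 = x := congrArg Prod.fst hri
    exact Prod.ext h1 rfl
  -- the equation
  have heq : ∀ x : ℂ, x ∈ Metric.ball (0:ℂ) δ → Y x = G (Y x) + x • h (x, Y x) := by
    intro x hx
    have ht := (hxmem x hx).1
    have hri := f.right_inv ht
    rw [hfcoe, hψx x hx] at hri
    have h2 : Y x - G (Y x) - x • h (x, Y x) = 0 := congrArg Prod.snd hri
    rw [sub_sub, sub_eq_zero] at h2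
    exact h2
  refine ⟨δ, ρ, hδpos, hδr, hρpos, hρr, Y, ?_, hY0, ?_, ?_⟩
  · -- analyticity
    intro x hx
    have hxV : (x, (0:E)) ∈ V := (hxmem x hx).2
    have haψ : AnalyticAt ℂ f.symm (x, (0:E)) := hVsub hxV
    have hιan : AnalyticAt ℂ (fun x : ℂ => (x, (0:E))) x := analyticAt_id.prod analyticAt_const
    exact analyticAt_snd.comp_of_eq (haψ.comp_of_eq hιan rfl) rfl
  · -- bound and equation
    intro x hx
    refine ⟨?_, heq x hx⟩
    apply hδ₂
    refine Metric.ball_subset_ball ?_ hx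
    exact (min_le_left _ _).trans (min_le_right _ _)
  · -- uniqueness
    intro x₀ hx₀ y₀ hy₀ heq₀
    have hx₀ε : x₀ ∈ Metric.ball (0:ℂ) ε₁ := by
      refine Metric.ball_subset_ball ?_ hx₀
      have : δ ≤ ε₁ / 2 := (min_le_right _ _).trans (min_le_left _ _)
      linarith
    have hy₀ε : y₀ ∈ Metric.ball (0:E) ε₁ := by
      simp only [Metric.mem_ball, dist_zero_right]
      exact hy₀.trans hρε₁
    have hmem1 : (x₀, y₀) ∈ f.source := hballs ⟨hx₀ε, hy₀ε⟩
    have hmem2 : f.symm (x₀, (0:E)) ∈ f.source := f.map_target (hxmem x₀ hx₀).1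
    rw [hψx x₀ hx₀] at hmem2
    have hΦ1 : Φ (x₀, y₀) = (x₀, (0:E)) := by
      simp only [hΦdef]
      refine Prod.ext rfl ?_
      rw [sub_sub, sub_eq_zero]
      exact heq₀
    have hΦ2 : Φ (x₀, Y x₀) = (x₀, (0:E)) := by
      have hri := f.right_inv (hxmem x₀ hx₀).1
      rw [hfcoe, hψx x₀ hx₀] at hri
      exact hri
    have hinj : (x₀, y₀) = (x₀, Y x₀) := by
      apply f.injOn hmem1 hmem2
      rw [hfcoe, hΦ1, hΦ2]
    exact congrArg Prod.snd hinj
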